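/- Let (G_n, f_n) be an inverse sequence of countable abelian groups indexed by ℕ, define G_n° = ⋂_{m ≥ n} Im(f_{n,m} : G_m → G_n), and consider the induced inverse sequence of quotient groups (G_n / G_n°). Then the inverse limit lim (G_n / G_n°) is the zero group: every coherent sequence of cosets (x_n + G_n°) with x_n + G_n° = f_n(x_{n+1}) + G_n° for all n satisfies x_n ∈ G_n° for all n. -/
import Mathlib


/-- The composite bonding map `f_{n,m} : G m →+ G n` for `n ≤ m`, namely
`f n ∘ f (n+1) ∘ ⋯ ∘ f (m-1)` (with `f_{n,n} = id`). -/
def fnm (G : ℕ → Type*) [∀ n, AddCommGroup (G n)] (f : ∀ n, G (n + 1) →+ G n)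
    (n m : ℕ) (h : n ≤ m) : G m →+ G n :=
  Nat.leRecOn h (fun {k} (g : G k →+ G n) => g.comp (f k)) (AddMonoidHom.id (G n))

/-- `G_n° = ⋂_{m ≥ n} Im (f_{n,m} : G m →+ G n)`, as an `AddSubgroup` of `G n`. -/
def Gcirc (G : ℕ → Type*) [∀ n, AddCommGroup (G n)] (f : ∀ n, G (n + 1) →+ G n)
    (n : ℕ) : AddSubgroup (G n) :=
  ⨅ (m : ℕ) (h : n ≤ m), (fnm G f n m h).range

section Aux
variable (G : ℕ → Type*) [∀ n, AddCommGroup (G n)] (f : ∀ n, G (n + 1) →+ G n)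

lemma fnm_self (n : ℕ) : fnm G f n n le_rfl = AddMonoidHom.id (G n) :=
  Nat.leRecOn_self _

lemma fnm_succ {n m : ℕ} (h : n ≤ m) (h2 : n ≤ m + 1) :
    fnm G f n (m + 1) h2 = (fnm G f n m h).comp (f m) :=
  Nat.leRecOn_succ h _

lemma fnm_comp {n m k : ℕ} (h1 : n ≤ m) (h2 : m ≤ k) :
    (fnm G f n m h1).comp (fnm G f m k h2) = fnm G f n k (h1.trans h2) := by
  induction h2 with
  | refl => rw [fnm_self]; rfl
  | step h2 ih =>
    rename_i k' _
    rw [fnm_succ G f h2 (Nat.le_succ_of_le h2), fnm_succ G f (h1.trans h2)]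
    rw [← AddMonoidHom.comp_assoc, ih]

lemma Gcirc_le_range {n m : ℕ} (h : n ≤ m) : Gcirc G f n ≤ (fnm G f n m h).range := by
  intro g hg
  simp only [Gcirc, AddSubgroup.mem_iInf] at hg
  exact hg m h

lemma fnm_mem_Gcirc {n m : ℕ} (h : n ≤ m) {g : G m} (hg : g ∈ Gcirc G f m) :
    fnm G f n m h g ∈ Gcirc G f n := by
  simp only [Gcirc, AddSubgroup.mem_iInf] at hg ⊢
  intro k hk
  rcases le_total k m with hkm | hmk
  · exact ⟨fnm G f k m hkm g, by rw [← AddMonoidHom.comp_apply, fnm_comp]⟩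
  · rcases hg k hmk with ⟨g', rfl⟩
    exact ⟨g', by rw [← AddMonoidHom.comp_apply, fnm_comp]⟩

end Aux

/-- Let `(G n, f n)` be an inverse sequence of countable abelian groups indexed
by `ℕ`, define `G_n° = ⋂_{m ≥ n} Im (f_{n,m} : G m →+ G n)`, and consider the induced inverse
sequence of quotient groups `(G n ⧸ G_n°)`.  Then the inverse limit `lim (G n ⧸ G_n°)` is the
zero group: every coherent sequence of cosets `(x n + G_n°)`, i.e. with
`x n + G_n° = f n (x (n+1)) + G_n°` (equivalently `x n - f n (x (n+1)) ∈ G_n°`) for all `n`,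
satisfies `x n ∈ G_n°` for all `n`. -/
theorem invLim_quotient_Gcirc_eq_zero
    (G : ℕ → Type*) [∀ n, AddCommGroup (G n)] [∀ n, Countable (G n)]
    (f : ∀ n, G (n + 1) →+ G n) :
    ∀ x : ∀ n, G n, (∀ n, x n - f n (x (n + 1)) ∈ Gcirc G f n) →
      ∀ n, x n ∈ Gcirc G f n := by
  intro x hx n
  have key : ∀ m, ∀ h : n ≤ m, x n - fnm G f n m h (x m) ∈ Gcirc G f n := by
    intro m
    induction m with
    | zero =>
      intro h
      have : n = 0 := Nat.le_zero.mp h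
      subst this
      rw [fnm_self]
      simpa using (Gcirc G f 0).zero_mem
    | succ m ih =>
      intro h
      rcases Nat.lt_or_ge n (m + 1) with h' | h'
      · have hm : n ≤ m := Nat.lt_succ_iff.mp h'
        have e : x n - fnm G f n (m + 1) h (x (m + 1)) =
            (x n - fnm G f n m hm (x m)) + fnm G f n m hm (x m - f m (x (m + 1))) := by
          rw [fnm_succ G f hm h, map_sub, AddMonoidHom.comp_apply]
          abel
        rw [e]
        exact (Gcirc G f n).add_mem (ih hm) (fnm_mem_Gcirc G f hm (hx m))
      · have : n = m + 1 := le_antisymm h h'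
        subst this
        rw [fnm_self]
        simpa using (Gcirc G f (m + 1)).zero_mem
  simp only [Gcirc, AddSubgroup.mem_iInf]
  intro m h
  have h1 : fnm G f n m h (x m) ∈ (fnm G f n m h).range := ⟨x m, rfl⟩
  have h2 := Gcirc_le_range G f h (key m h)
  have := (fnm G f n m h).range.add_mem h1 h2
  simpa using this
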